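/- For every real z with 0 < z < 1, the hypergeometric values F(1/6,1/2,2/3;1−z) and F(1/6,1/2,1;z) are positive real numbers, Re φ₁(z) = −1/2, and Im φ₁(z) > √3/2. Moreover Im φ₁(z) → +∞ as z → 0⁺ along (0,1), and φ₁(z) → ω = (−1+√3 i)/2 as z → 1⁻ along (0,1). -/

import Mathlib

open Complex

/-- Gauss hypergeometric series `F(a,b,c;z) = ∑ (a)_n (b)_n / ((c)_n n!) zⁿ`. -/
noncomputable def hyperF (a b c z : ℂ) : ℂ :=
  ∑' n : ℕ, ((∏ k ∈ Finset.range n, (a + k)) * (∏ k ∈ Finset.range n, (b + k)) /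
    ((∏ k ∈ Finset.range n, (c + k)) * (n.factorial : ℂ))) * z ^ n

/-- `ω = (−1 + √3 i)/2`, the primitive cube root of unity in the upper half-plane. -/
noncomputable def omegaC : ℂ := (-1 + Real.sqrt 3 * Complex.I) / 2

/-- The beta function `B(x,y) = Γ(x)Γ(y)/Γ(x+y)`. -/
noncomputable def betaFn (x y : ℂ) : ℂ :=
  Complex.Gamma x * Complex.Gamma y / Complex.Gamma (x + y)

/-- Schwarz's map `φ₁` for `(a,b,c) = (1/6,1/2,1)`. -/
noncomputable def phi1 (z : ℂ) : ℂ :=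
  omegaC ^ 2 + Complex.I * (betaFn (1/6) (1/2) / Real.pi) *
    hyperF (1/6) (1/2) (2/3) (1 - z) / hyperF (1/6) (1/2) 1 z

namespace Phi1Aux
open Finset

noncomputable def poch (r : ℝ) (n : ℕ) : ℝ := ∏ k ∈ Finset.range n, (r + k)

@[simp] lemma poch_zero (r : ℝ) : poch r 0 = 1 := by simp [poch]

lemma poch_succ (r : ℝ) (n : ℕ) : poch r (n + 1) = poch r n * (r + n) := by
  simp [poch, Finset.prod_range_succ]

lemma poch_pos {r : ℝ} (hr : 0 < r) (n : ℕ) : 0 < poch r n := by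
  apply Finset.prod_pos; intro k _; positivity

lemma poch_nonneg {r : ℝ} (hr : 0 ≤ r) (n : ℕ) : 0 ≤ poch r n := by
  apply Finset.prod_nonneg; intro k _; positivity

lemma poch_one (n : ℕ) : poch 1 n = n.factorial := by
  induction n with
  | zero => simp
  | succ n ih => rw [poch_succ, ih]; push_cast [Nat.factorial_succ]; ring

lemma poch_le_poch {r s : ℝ} (h0 : 0 ≤ r) (h : r ≤ s) (n : ℕ) : poch r n ≤ poch s n := by
  apply Finset.prod_le_prod
  · intro k _; positivity
  · intro k _; linarith

lemma factorial_pos_real (n : ℕ) : (0:ℝ) < n.factorial := by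
  exact_mod_cast n.factorial_pos

noncomputable def bin (r : ℝ) (n : ℕ) : ℝ := poch r n / n.factorial

@[simp] lemma bin_zero (r : ℝ) : bin r 0 = 1 := by simp [bin]

lemma bin_pos {r : ℝ} (hr : 0 < r) (n : ℕ) : 0 < bin r n :=
  div_pos (poch_pos hr n) (factorial_pos_real n)

lemma bin_nonneg {r : ℝ} (hr : 0 ≤ r) (n : ℕ) : 0 ≤ bin r n :=
  div_nonneg (poch_nonneg hr n) (factorial_pos_real n).le

lemma bin_le_one {r : ℝ} (h0 : 0 ≤ r) (h1 : r ≤ 1) (n : ℕ) : bin r n ≤ 1 := by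
  rw [bin, div_le_one (factorial_pos_real n)]
  calc poch r n ≤ poch 1 n := poch_le_poch h0 h1 n
  _ = n.factorial := poch_one n

lemma summable_bin_mul_pow {r t : ℝ} (h0 : 0 ≤ r) (h1 : r ≤ 1) (ht0 : 0 ≤ t) (ht1 : t < 1) :
    Summable fun n => bin r n * t ^ n := by
  apply Summable.of_nonneg_of_le (fun n => by have := bin_nonneg h0 n; positivity) (fun n => ?_)
    (summable_geometric_of_lt_one ht0 ht1)
  calc bin r n * t ^ n ≤ 1 * t ^ n :=
        mul_le_mul_of_nonneg_right (bin_le_one h0 h1 n) (by positivity)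
  _ = t ^ n := one_mul _

lemma vandermonde_poch (r s : ℝ) (n : ℕ) :
    ∑ k ∈ range (n + 1), (n.choose k : ℝ) * (poch r k * poch s (n - k)) = poch (r + s) n := by
  induction n with
  | zero => simp
  | succ n ih =>
    set g : ℕ → ℝ := fun k => ((n+1).choose k : ℝ) * (poch r k * poch s (n + 1 - k)) with hg
    set f : ℕ → ℝ := fun j => (n.choose j : ℝ) * (poch r j * poch s (n + 1 - j)) with hf
    set A : ℕ → ℝ := fun k => (n.choose k : ℝ) * ((r + k) * (poch r k * poch s (n - k))) with hA
    have key : ∑ k ∈ range (n + 2), g k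
        = (r + s + n) * ∑ k ∈ range (n + 1), (n.choose k : ℝ) * (poch r k * poch s (n - k)) := by
      have h1 : ∀ k ∈ range (n + 1), g (k + 1) = A k + f (k + 1) := by
        intro k hk
        simp only [hg, hf, hA, Nat.choose_succ_succ]
        have e1 : n + 1 - (k + 1) = n - k := by omega
        rw [e1, poch_succ]
        push_cast
        ring
      calc ∑ k ∈ range (n + 2), g k = (∑ k ∈ range (n + 1), g (k + 1)) + g 0 :=
            Finset.sum_range_succ' g (n + 1)
      _ = (∑ k ∈ range (n + 1), (A k + f (k + 1))) + f 0 := by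
            rw [Finset.sum_congr rfl h1]; simp [hg, hf]
      _ = (∑ k ∈ range (n + 1), A k) + ((∑ k ∈ range (n + 1), f (k + 1)) + f 0) := by
            rw [Finset.sum_add_distrib]; ring
      _ = (∑ k ∈ range (n + 1), A k) + ∑ j ∈ range (n + 2), f j := by
            rw [← Finset.sum_range_succ' f (n + 1)]
      _ = (∑ k ∈ range (n + 1), A k) + ((∑ j ∈ range (n + 1), f j) + f (n + 1)) := by
            rw [Finset.sum_range_succ f (n + 1)]
      _ = (∑ k ∈ range (n + 1), A k) + ∑ j ∈ range (n + 1), f j := by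
            simp [hf, Nat.choose_succ_self]
      _ = ∑ k ∈ range (n + 1), (A k + f k) := (Finset.sum_add_distrib).symm
      _ = ∑ k ∈ range (n + 1), (r + s + n) * ((n.choose k : ℝ) * (poch r k * poch s (n - k))) := by
            apply Finset.sum_congr rfl
            intro k hk
            simp only [hA, hf]
            have hkn : k ≤ n := by simpa [Nat.lt_succ_iff] using hk
            have e1 : n + 1 - k = (n - k) + 1 := by omega
            have e2 : ((n - k : ℕ) : ℝ) = (n : ℝ) - k := by
              push_cast [Nat.cast_sub hkn]; ring
            rw [e1, poch_succ, e2]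
            ring
      _ = (r + s + n) * ∑ k ∈ range (n + 1), (n.choose k : ℝ) * (poch r k * poch s (n - k)) := by
            rw [Finset.mul_sum]
    rw [key, ih, poch_succ]; ring

lemma vandermonde_bin (r s : ℝ) (n : ℕ) :
    ∑ k ∈ range (n + 1), bin r k * bin s (n - k) = bin (r + s) n := by
  have h : ∀ k ∈ range (n + 1), bin r k * bin s (n - k)
      = ((n.choose k : ℝ) * (poch r k * poch s (n - k))) / n.factorial := by
    intro k hk
    have hkn : k ≤ n := by simpa [Nat.lt_succ_iff] using hk
    have hch : (n.choose k : ℝ) * (k.factorial : ℝ) * ((n - k).factorial : ℝ) = n.factorial := by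
      exact_mod_cast congrArg (Nat.cast (R := ℝ)) (Nat.choose_mul_factorial_mul_factorial hkn)
    have hC : (0:ℝ) < n.choose k := by exact_mod_cast Nat.choose_pos hkn
    rw [bin, bin, div_mul_div_comm, ← hch]
    field_simp
  rw [Finset.sum_congr rfl h, ← Finset.sum_div, vandermonde_poch, bin]

lemma norm_summable_of_nonneg {f : ℕ → ℝ} (h0 : ∀ n, 0 ≤ f n) (hs : Summable f) :
    Summable fun n => ‖f n‖ := by
  refine hs.congr fun n => ?_
  rw [Real.norm_eq_abs, _root_.abs_of_nonneg (h0 n)]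

lemma tsum_bin_mul_bin {r s t : ℝ} (hr0 : 0 < r) (hr1 : r ≤ 1) (hs0 : 0 < s) (hs1 : s ≤ 1)
    (ht0 : 0 ≤ t) (ht1 : t < 1) :
    (∑' n, bin r n * t ^ n) * (∑' n, bin s n * t ^ n) = ∑' n, bin (r + s) n * t ^ n := by
  have hsum1 := summable_bin_mul_pow hr0.le hr1 ht0 ht1
  have hsum2 := summable_bin_mul_pow hs0.le hs1 ht0 ht1
  have h1 := norm_summable_of_nonneg
    (fun n => mul_nonneg (bin_nonneg hr0.le n) (pow_nonneg ht0 n)) hsum1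
  have h2 := norm_summable_of_nonneg
    (fun n => mul_nonneg (bin_nonneg hs0.le n) (pow_nonneg ht0 n)) hsum2
  rw [tsum_mul_tsum_eq_tsum_sum_antidiagonal_of_summable_norm h1 h2]
  apply tsum_congr
  intro n
  rw [Finset.Nat.sum_antidiagonal_eq_sum_range_succ_mk]
  have h : ∀ k ∈ range (n + 1),
      bin r k * t ^ k * (bin s (n - k) * t ^ (n - k)) = (bin r k * bin s (n - k)) * t ^ n := by
    intro k hk
    have hkn : k ≤ n := by simpa [Nat.lt_succ_iff] using hk
    have : t ^ k * t ^ (n - k) = t ^ n := by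
      rw [← pow_add]
      congr 1
      omega
    calc bin r k * t ^ k * (bin s (n - k) * t ^ (n - k))
        = (bin r k * bin s (n - k)) * (t ^ k * t ^ (n - k)) := by ring
    _ = (bin r k * bin s (n - k)) * t ^ n := by rw [this]
  rw [Finset.sum_congr rfl h, ← Finset.sum_mul, vandermonde_bin]

lemma tsum_bin_one {t : ℝ} (ht0 : 0 ≤ t) (ht1 : t < 1) :
    ∑' n, bin 1 n * t ^ n = (1 - t)⁻¹ := by
  have h : ∀ n, bin 1 n * t ^ n = t ^ n := by
    intro n
    rw [bin, poch_one, div_self (factorial_pos_real n).ne', one_mul]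
  rw [tsum_congr h, tsum_geometric_of_lt_one ht0 ht1]

lemma hasSum_bin_half {t : ℝ} (ht0 : 0 ≤ t) (ht1 : t < 1) :
    HasSum (fun n => bin (1/2) n * t ^ n) ((1 - t) ^ (-(1/2) : ℝ)) := by
  have hs := summable_bin_mul_pow (r := 1/2) (by norm_num) (by norm_num) ht0 ht1
  have h1t : (0:ℝ) < 1 - t := by linarith
  set x := ∑' n, bin (1/2) n * t ^ n with hx
  have hxpos : (0:ℝ) < x := by
    have h0 : bin (1/2) 0 * t ^ 0 ≤ x :=
      Summable.le_tsum hs 0 (fun i _ => mul_nonneg (bin_nonneg (by norm_num) i) (pow_nonneg ht0 i))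
    rw [bin_zero] at h0
    norm_num at h0
    linarith
  have hsq : x ^ 2 = (1 - t)⁻¹ := by
    rw [sq, hx, tsum_bin_mul_bin (by norm_num) (by norm_num) (by norm_num) (by norm_num) ht0 ht1]
    norm_num
    exact tsum_bin_one ht0 ht1
  have hy : ((1 - t) ^ (-(1/2) : ℝ)) ^ 2 = (1 - t)⁻¹ := by
    rw [← Real.rpow_natCast ((1 - t) ^ (-(1/2) : ℝ)) 2, ← Real.rpow_mul h1t.le]
    norm_num
    exact Real.rpow_neg_one _
  have hxy : x = (1 - t) ^ (-(1/2) : ℝ) := by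
    have hynn : (0:ℝ) ≤ (1 - t) ^ (-(1/2) : ℝ) := Real.rpow_nonneg h1t.le _
    calc x = Real.sqrt (x ^ 2) := (Real.sqrt_sq hxpos.le).symm
    _ = Real.sqrt (((1 - t) ^ (-(1/2) : ℝ)) ^ 2) := by rw [hsq, hy]
    _ = (1 - t) ^ (-(1/2) : ℝ) := Real.sqrt_sq hynn
  rw [← hxy]
  exact hs.hasSum

/-! ### The coefficient sequences -/

noncomputable def cseq (n : ℕ) : ℝ := bin (1/6) n * bin (1/2) n

noncomputable def dseq (n : ℕ) : ℝ :=
  poch (1/6) n * poch (1/2) n / (poch (2/3) n * n.factorial)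

lemma cseq_pos (n : ℕ) : 0 < cseq n :=
  mul_pos (bin_pos (by norm_num) n) (bin_pos (by norm_num) n)

lemma dseq_pos (n : ℕ) : 0 < dseq n :=
  div_pos (mul_pos (poch_pos (by norm_num) n) (poch_pos (by norm_num) n))
    (mul_pos (poch_pos (by norm_num) n) (factorial_pos_real n))

@[simp] lemma cseq_zero : cseq 0 = 1 := by simp [cseq]
@[simp] lemma dseq_zero : dseq 0 = 1 := by simp [dseq]

lemma cseq_le_one (n : ℕ) : cseq n ≤ 1 := by
  have h1 := bin_le_one (by norm_num : (0:ℝ) ≤ 1/6) (by norm_num) n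
  have h2 := bin_le_one (by norm_num : (0:ℝ) ≤ 1/2) (by norm_num) n
  have := bin_nonneg (by norm_num : (0:ℝ) ≤ 1/6) n
  have := bin_nonneg (by norm_num : (0:ℝ) ≤ 1/2) n
  calc cseq n ≤ 1 * 1 := mul_le_mul h1 h2 (by assumption) (by norm_num)
  _ = 1 := by norm_num

lemma dseq_succ (n : ℕ) :
    dseq (n + 1) = dseq n * ((1/6 + n) * (1/2 + n) / ((2/3 + n) * (n + 1))) := by
  rw [dseq, dseq, poch_succ, poch_succ, poch_succ, Nat.factorial_succ]
  have h1 := (poch_pos (by norm_num : (0:ℝ) < 2/3) n).ne'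
  have h2 := (factorial_pos_real n).ne'
  field_simp
  push_cast
  ring

lemma dseq_le_one (n : ℕ) : dseq n ≤ 1 := by
  induction n with
  | zero => simp
  | succ n ih =>
    rw [dseq_succ]
    have hd := dseq_pos n
    have hn : (0:ℝ) ≤ n := Nat.cast_nonneg n
    have hratio : (1/6 + (n:ℝ)) * (1/2 + n) / ((2/3 + n) * (n + 1)) ≤ 1 := by
      rw [div_le_one (by positivity)]
      nlinarith
    calc dseq n * ((1/6 + (n:ℝ)) * (1/2 + n) / ((2/3 + n) * (n + 1))) ≤ 1 * 1 := by
          apply mul_le_mul ih hratio (by positivity) (by norm_num)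
    _ = 1 := by norm_num

lemma dseq_lower (n : ℕ) (hn : 1 ≤ n) : 1/8 ≤ (n : ℝ) * dseq n := by
  induction n, hn using Nat.le_induction with
  | base =>
    rw [show (1:ℕ) = 0 + 1 from rfl, dseq_succ]
    norm_num
  | succ n hn ih =>
    rw [dseq_succ]
    have hd := dseq_pos n
    have h23 : (0:ℝ) < 2/3 + n := by positivity
    have expand : ((n + 1 : ℕ):ℝ) * (dseq n * ((1/6 + (n:ℝ)) * (1/2 + n) / ((2/3 + n) * (n + 1))))
        = dseq n * ((1/6 + (n:ℝ)) * (1/2 + n) / (2/3 + n)) := by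
      push_cast
      field_simp
    rw [expand]
    have hq : (n:ℝ) ≤ (1/6 + (n:ℝ)) * (1/2 + n) / (2/3 + n) := by
      rw [le_div_iff₀ h23]
      nlinarith [Nat.cast_nonneg (α := ℝ) n]
    calc (1:ℝ)/8 ≤ (n:ℝ) * dseq n := ih
    _ = dseq n * n := by ring
    _ ≤ dseq n * ((1/6 + (n:ℝ)) * (1/2 + n) / (2/3 + n)) :=
          mul_le_mul_of_nonneg_left hq hd.le

lemma summable_dseq_mul_pow {t : ℝ} (ht0 : 0 ≤ t) (ht1 : t < 1) :
    Summable fun n => dseq n * t ^ n := by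
  apply Summable.of_nonneg_of_le (fun n => by have := (dseq_pos n).le; positivity) (fun n => ?_)
    (summable_geometric_of_lt_one ht0 ht1)
  calc dseq n * t ^ n ≤ 1 * t ^ n :=
        mul_le_mul_of_nonneg_right (dseq_le_one n) (by positivity)
  _ = t ^ n := one_mul _

lemma bin_succ (r : ℝ) (n : ℕ) : bin r (n + 1) = bin r n * ((r + n) / (n + 1)) := by
  rw [bin, bin, poch_succ, Nat.factorial_succ, div_mul_div_comm]
  push_cast
  ring

lemma bin_third_cubed (n : ℕ) : bin (1/3) n ^ 3 * ((n:ℝ) + 1) ^ 2 ≤ 1 := by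
  induction n with
  | zero => simp
  | succ n ih =>
    have hb := bin_pos (show (0:ℝ) < 1/3 by norm_num) n
    have hn : (0:ℝ) ≤ n := Nat.cast_nonneg n
    rw [bin_succ]
    push_cast
    have e : (bin (1/3) n * ((1/3 + (n:ℝ)) / (n + 1))) ^ 3 * ((n:ℝ) + 1 + 1) ^ 2
        = (bin (1/3) n ^ 3 * ((n:ℝ) + 1) ^ 2) *
          ((1/3 + (n:ℝ)) ^ 3 * ((n:ℝ) + 2) ^ 2 / ((n:ℝ) + 1) ^ 5) := by
      field_simp
      ring
    rw [e]
    have h2 : (1/3 + (n:ℝ)) ^ 3 * ((n:ℝ) + 2) ^ 2 ≤ ((n:ℝ) + 1) ^ 5 := by nlinarith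
    have h3 : (1/3 + (n:ℝ)) ^ 3 * ((n:ℝ) + 2) ^ 2 / ((n:ℝ) + 1) ^ 5 ≤ 1 := by
      rw [div_le_one (by positivity)]
      exact h2
    have h4 : (0:ℝ) ≤ bin (1/3) n ^ 3 * ((n:ℝ) + 1) ^ 2 := by positivity
    calc (bin (1/3) n ^ 3 * ((n:ℝ) + 1) ^ 2) *
          ((1/3 + (n:ℝ)) ^ 3 * ((n:ℝ) + 2) ^ 2 / ((n:ℝ) + 1) ^ 5) ≤ 1 * 1 :=
        mul_le_mul ih h3 (by positivity) (by norm_num)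
    _ = 1 := by norm_num

lemma cseq_le_bin_third_sq (n : ℕ) : cseq n ≤ bin (1/3) n ^ 2 := by
  have hnum : poch (1/6) n * poch (1/2) n ≤ poch (1/3) n ^ 2 := by
    rw [poch, poch, poch, ← Finset.prod_mul_distrib, ← Finset.prod_pow]
    apply Finset.prod_le_prod
    · intro k _
      have : (0:ℝ) ≤ k := Nat.cast_nonneg k
      positivity
    · intro k _
      have : (0:ℝ) ≤ k := Nat.cast_nonneg k
      nlinarith
  rw [cseq, bin, bin, bin, div_mul_div_comm, div_pow]
  apply div_le_div_of_nonneg_right hnum ?_ |>.trans_eq ?_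
  · positivity
  · rw [sq ((n.factorial : ℝ))]
  
lemma cseq_le_rpow (n : ℕ) : cseq n ≤ ((n:ℝ) + 1) ^ (-(4/3) : ℝ) := by
  have hu : (0:ℝ) < (n:ℝ) + 1 := by positivity
  have hc := (cseq_pos n).le
  have h1 : cseq n ^ 3 ≤ (((n:ℝ) + 1) ^ 4)⁻¹ := by
    have hb := (bin_pos (show (0:ℝ) < 1/3 by norm_num) n).le
    have h2 : cseq n ^ 3 ≤ (bin (1/3) n ^ 2) ^ 3 := by
      apply pow_le_pow_left₀ hc (cseq_le_bin_third_sq n)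
    have h3 : (bin (1/3) n ^ 2) ^ 3 = (bin (1/3) n ^ 3) ^ 2 := by ring
    have h4 : bin (1/3) n ^ 3 ≤ (((n:ℝ) + 1) ^ 2)⁻¹ := by
      rw [inv_eq_one_div, le_div_iff₀ (by positivity)]
      exact bin_third_cubed n
    have h5 : (bin (1/3) n ^ 3) ^ 2 ≤ ((((n:ℝ) + 1) ^ 2)⁻¹) ^ 2 := by
      apply pow_le_pow_left₀ (by positivity) h4
    calc cseq n ^ 3 ≤ (bin (1/3) n ^ 3) ^ 2 := by rw [← h3]; exact h2
    _ ≤ ((((n:ℝ) + 1) ^ 2)⁻¹) ^ 2 := h5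
    _ = (((n:ℝ) + 1) ^ 4)⁻¹ := by rw [inv_pow, ← pow_mul]
  -- now take cube roots via rpow
  have e1 : cseq n = (cseq n ^ (3:ℕ)) ^ ((1:ℝ)/3) := by
    rw [← Real.rpow_natCast (cseq n) 3, ← Real.rpow_mul hc]
    norm_num
  rw [e1]
  have e2 : ((((n:ℝ) + 1) ^ (4:ℕ))⁻¹) ^ ((1:ℝ)/3) = ((n:ℝ) + 1) ^ (-(4/3) : ℝ) := by
    rw [← Real.rpow_natCast ((n:ℝ) + 1) 4, ← Real.rpow_neg hu.le, ← Real.rpow_mul hu.le]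
    norm_num
  rw [← e2]
  apply Real.rpow_le_rpow (by positivity) h1 (by norm_num)

lemma summable_cseq : Summable cseq := by
  have hs : Summable (fun n : ℕ => 1 / ((n:ℝ) ^ ((4:ℝ)/3))) :=
    Real.summable_one_div_nat_rpow.mpr (by norm_num)
  have hs2 : Summable (fun n : ℕ => 1 / ((((n+1:ℕ)):ℝ) ^ ((4:ℝ)/3))) :=
    (summable_nat_add_iff 1).mpr hs
  have hs3 : Summable (fun n : ℕ => ((n:ℝ) + 1) ^ (-(4/3) : ℝ)) := by
    refine hs2.congr fun n => ?_
    have h : (((n+1:ℕ)):ℝ) = (n:ℝ) + 1 := by push_cast; ring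
    rw [h, Real.rpow_neg (by positivity : (0:ℝ) ≤ (n:ℝ) + 1), one_div]
  exact Summable.of_nonneg_of_le (fun n => (cseq_pos n).le) cseq_le_rpow hs3

lemma summable_cseq_mul_pow {t : ℝ} (ht0 : 0 ≤ t) (ht1 : t ≤ 1) :
    Summable fun n => cseq n * t ^ n := by
  apply Summable.of_nonneg_of_le (fun n => by have := (cseq_pos n).le; positivity) (fun n => ?_)
    summable_cseq
  calc cseq n * t ^ n ≤ cseq n * 1 := by
        apply mul_le_mul_of_nonneg_left _ (cseq_pos n).le
        exact pow_le_one₀ ht0 ht1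
  _ = cseq n := mul_one _

lemma tendsto_sum_dseq :
    Filter.Tendsto (fun N => ∑ n ∈ Finset.range N, dseq n) Filter.atTop Filter.atTop := by
  rw [← Filter.tendsto_add_atTop_iff_nat 1]
  have hlow : ∀ N : ℕ, (1/8) * ∑ k ∈ Finset.range N, 1/((k:ℝ)+1)
      ≤ ∑ n ∈ Finset.range (N+1), dseq n := by
    intro N
    rw [Finset.sum_range_succ' (fun n => dseq n) N, Finset.mul_sum]
    have hterm : ∀ k ∈ Finset.range N, 1/8 * (1/((k:ℝ)+1)) ≤ dseq (k+1) := by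
      intro k _
      have h := dseq_lower (k+1) (by omega)
      push_cast at h
      rw [mul_one_div, div_le_iff₀ (by positivity)]
      linarith
    calc ∑ k ∈ Finset.range N, 1/8 * (1/((k:ℝ)+1)) ≤ ∑ k ∈ Finset.range N, dseq (k+1) :=
          Finset.sum_le_sum hterm
    _ ≤ ∑ k ∈ Finset.range N, dseq (k+1) + dseq 0 := by
          have := (dseq_pos 0).le
          linarith
  apply Filter.tendsto_atTop_mono hlow
  exact Filter.Tendsto.const_mul_atTop (by norm_num : (0:ℝ) < 1/8)
    Real.tendsto_sum_range_one_div_nat_succ_atTop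

/-! ### Limits of the two series -/

open Filter Set Topology

lemma F1_ge_one {t : ℝ} (ht0 : 0 ≤ t) (ht1 : t < 1) : 1 ≤ ∑' n, dseq n * t ^ n := by
  have hs := summable_dseq_mul_pow ht0 ht1
  have h0 : dseq 0 * t ^ 0 ≤ ∑' n, dseq n * t ^ n :=
    Summable.le_tsum hs 0 (fun i _ => mul_nonneg (dseq_pos i).le (pow_nonneg ht0 i))
  simpa using h0

lemma F2_ge_one {t : ℝ} (ht0 : 0 ≤ t) (ht1 : t ≤ 1) : 1 ≤ ∑' n, cseq n * t ^ n := by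
  have hs := summable_cseq_mul_pow ht0 ht1
  have h0 : cseq 0 * t ^ 0 ≤ ∑' n, cseq n * t ^ n :=
    Summable.le_tsum hs 0 (fun i _ => mul_nonneg (cseq_pos i).le (pow_nonneg ht0 i))
  simpa using h0

lemma F2_lt_S {t : ℝ} (ht0 : 0 < t) (ht1 : t < 1) :
    ∑' n, cseq n * t ^ n < ∑' n, cseq n := by
  have hle : ∀ n, cseq n * t ^ n ≤ cseq n := by
    intro n
    calc cseq n * t ^ n ≤ cseq n * 1 :=
          mul_le_mul_of_nonneg_left (pow_le_one₀ ht0.le ht1.le) (cseq_pos n).le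
    _ = cseq n := mul_one _
  have hlt : cseq 1 * t ^ 1 < cseq 1 := by
    have h := cseq_pos 1
    calc cseq 1 * t ^ 1 < cseq 1 * 1 := by
          apply mul_lt_mul_of_pos_left _ h
          simpa using ht1
    _ = cseq 1 := mul_one _
  exact Summable.tsum_lt_tsum hle hlt (summable_cseq_mul_pow ht0.le ht1.le) summable_cseq

lemma F2_tendsto_S :
    Tendsto (fun t : ℝ => ∑' n, cseq n * t ^ n) (nhdsWithin 1 (Set.Ioo (0:ℝ) 1))
      (nhds (∑' n, cseq n)) := by
  have h := Real.tendsto_tsum_powerSeries_nhdsWithin_lt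
    (f := cseq) summable_cseq.hasSum.tendsto_sum_nat
  exact h.mono_left (nhdsWithin_mono 1 Set.Ioo_subset_Iio_self)

lemma F1_tendsto_atTop :
    Tendsto (fun t : ℝ => ∑' n, dseq n * t ^ n) (nhdsWithin 1 (Set.Ioo (0:ℝ) 1)) atTop := by
  rw [tendsto_atTop]
  intro M
  obtain ⟨N, hN⟩ := (Filter.tendsto_atTop.mp tendsto_sum_dseq (M + 1)).exists
  have hpoly : Tendsto (fun t : ℝ => ∑ n ∈ Finset.range N, dseq n * t ^ n)
      (nhdsWithin 1 (Set.Ioo (0:ℝ) 1)) (nhds (∑ n ∈ Finset.range N, dseq n)) := by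
    apply Filter.Tendsto.mono_left _ nhdsWithin_le_nhds
    have : Continuous (fun t : ℝ => ∑ n ∈ Finset.range N, dseq n * t ^ n) := by
      continuity
    simpa using this.tendsto 1
  have hev : ∀ᶠ t in nhdsWithin 1 (Set.Ioo (0:ℝ) 1),
      M < ∑ n ∈ Finset.range N, dseq n * t ^ n := by
    apply hpoly.eventually_const_lt
    linarith
  filter_upwards [hev, self_mem_nhdsWithin] with t ht htIoo
  have hsum := summable_dseq_mul_pow htIoo.1.le htIoo.2
  have : ∑ n ∈ Finset.range N, dseq n * t ^ n ≤ ∑' n, dseq n * t ^ n :=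
    Summable.sum_le_tsum (Finset.range N)
      (fun i _ => mul_nonneg (dseq_pos i).le (pow_nonneg htIoo.1.le i)) hsum
  linarith

set_option maxHeartbeats 1000000 in
lemma F1_tendsto_one :
    Tendsto (fun t : ℝ => ∑' n, dseq n * t ^ n) (nhdsWithin 0 (Set.Ioo (0:ℝ) 1)) (nhds 1) := by
  have hlb : ∀ᶠ t in nhdsWithin 0 (Set.Ioo (0:ℝ) 1), 1 ≤ ∑' n, dseq n * t ^ n := by
    filter_upwards [self_mem_nhdsWithin] with t ht
    exact F1_ge_one ht.1.le ht.2
  have hub : ∀ᶠ t in nhdsWithin 0 (Set.Ioo (0:ℝ) 1), ∑' n, dseq n * t ^ n ≤ 1 + 2 * t := by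
    have hhalf : ∀ᶠ t in nhdsWithin 0 (Set.Ioo (0:ℝ) 1), t < 1/2 :=
      (eventually_lt_nhds (show (0:ℝ) < 1/2 by norm_num)).filter_mono nhdsWithin_le_nhds
    filter_upwards [hhalf, self_mem_nhdsWithin] with t ht2 htIoo
    have hsum := summable_dseq_mul_pow htIoo.1.le htIoo.2
    have hsum' : Summable fun n => dseq (n+1) * t ^ (n+1) := (summable_nat_add_iff 1).mpr hsum
    have hshift : ∑' n, dseq n * t ^ n = 1 + ∑' n, dseq (n+1) * t ^ (n+1) := by
      rw [Summable.tsum_eq_zero_add hsum]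
      simp
    rw [hshift]
    have hgeo : Summable fun n : ℕ => t * (1/2) ^ n :=
      (summable_geometric_of_lt_one (by norm_num) (by norm_num)).mul_left t
    have hle : ∀ n : ℕ, dseq (n+1) * t ^ (n+1) ≤ t * (1/2) ^ n := by
      intro n
      have h1 : dseq (n+1) * t ^ (n+1) ≤ 1 * t ^ (n+1) :=
        mul_le_mul_of_nonneg_right (dseq_le_one (n+1)) (pow_nonneg htIoo.1.le _)
      have h2 : t ^ (n+1) ≤ t * (1/2) ^ n := by
        rw [pow_succ, mul_comm]
        apply mul_le_mul_of_nonneg_left _ htIoo.1.le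
        exact pow_le_pow_left₀ htIoo.1.le ht2.le n
      linarith
    have hbound : ∑' n, dseq (n+1) * t ^ (n+1) ≤ ∑' n : ℕ, t * (1/2) ^ n :=
      Summable.tsum_le_tsum hle hsum' hgeo
    have hgeoval : ∑' n : ℕ, t * (1/2) ^ n = 2 * t := by
      rw [tsum_mul_left, tsum_geometric_of_lt_one (by norm_num) (by norm_num)]
      norm_num
      ring
    rw [hgeoval] at hbound
    linarith
  have h1 : Tendsto (fun _ : ℝ => (1:ℝ)) (nhdsWithin 0 (Set.Ioo (0:ℝ) 1)) (nhds 1) :=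
    tendsto_const_nhds
  have h2 : Tendsto (fun t : ℝ => 1 + 2 * t) (nhdsWithin 0 (Set.Ioo (0:ℝ) 1)) (nhds 1) := by
    have : Continuous fun t : ℝ => 1 + 2 * t := by continuity
    have := (this.tendsto 0).mono_left (nhdsWithin_le_nhds (s := Set.Ioo (0:ℝ) 1))
    simpa using this
  exact tendsto_of_tendsto_of_tendsto_of_le_of_le' h1 h2 hlb hub

/-! ### Beta integrals and Gauss summation -/

open MeasureTheory

lemma Gamma_add_nat {p : ℝ} (hp : 0 < p) (n : ℕ) :
    Real.Gamma (p + n) = poch p n * Real.Gamma p := by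
  induction n with
  | zero => simp
  | succ n ih =>
    have hpn : (0:ℝ) < p + n := by positivity
    have e : p + ((n:ℕ)+1 : ℕ) = (p + n) + 1 := by push_cast; ring
    rw [e, Real.Gamma_add_one hpn.ne', ih, poch_succ]
    ring

lemma complex_beta_eq {p q : ℝ} (hp : 0 < p) (hq : 0 < q) :
    Complex.betaIntegral p q
      = ((∫ x in (0:ℝ)..1, x ^ (p-1) * (1-x) ^ (q-1) : ℝ) : ℂ) := by
  rw [Complex.betaIntegral, ← intervalIntegral.integral_ofReal]
  apply intervalIntegral.integral_congr
  intro x hx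
  rw [Set.uIcc_of_le (by norm_num : (0:ℝ) ≤ 1)] at hx
  have h1 : (0:ℝ) ≤ x := hx.1
  have h2 : (0:ℝ) ≤ 1 - x := by linarith [hx.2]
  show (x:ℂ) ^ ((p:ℂ)-1) * (1-(x:ℂ)) ^ ((q:ℂ)-1) = ((x ^ (p-1) * (1-x) ^ (q-1) : ℝ) : ℂ)
  rw [Complex.ofReal_mul, Complex.ofReal_cpow h1, Complex.ofReal_cpow h2]
  push_cast
  ring_nf

lemma real_beta_value {p q : ℝ} (hp : 0 < p) (hq : 0 < q) :
    ∫ x in (0:ℝ)..1, x ^ (p-1) * (1-x) ^ (q-1)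
      = Real.Gamma p * Real.Gamma q / Real.Gamma (p+q) := by
  have h := Complex.Gamma_mul_Gamma_eq_betaIntegral (s := (p:ℂ)) (t := (q:ℂ))
    (by simpa using hp) (by simpa using hq)
  rw [complex_beta_eq hp hq] at h
  have hG : Complex.Gamma ((p:ℂ) + (q:ℂ)) = ((Real.Gamma (p+q) : ℝ) : ℂ) := by
    rw [← Complex.ofReal_add, Complex.Gamma_ofReal]
  rw [Complex.Gamma_ofReal, Complex.Gamma_ofReal, hG] at h
  have h' : Real.Gamma p * Real.Gamma q
      = Real.Gamma (p+q) * ∫ x in (0:ℝ)..1, x ^ (p-1) * (1-x) ^ (q-1) := by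
    exact_mod_cast h
  have hpq : (0:ℝ) < Real.Gamma (p+q) := Real.Gamma_pos_of_pos (by positivity)
  field_simp
  linarith [h']

lemma beta_Ioo {p q : ℝ} (hp : 0 < p) (hq : 0 < q) :
    ∫ x in Set.Ioo (0:ℝ) 1, x ^ (p-1) * (1-x) ^ (q-1)
      = Real.Gamma p * Real.Gamma q / Real.Gamma (p+q) := by
  rw [← MeasureTheory.integral_Ioc_eq_integral_Ioo,
    ← intervalIntegral.integral_of_le (by norm_num : (0:ℝ) ≤ 1)]
  exact real_beta_value hp hq

lemma integrableOn_beta {p q : ℝ} (hp : 0 < p) (hq : 0 < q) :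
    IntegrableOn (fun x : ℝ => x ^ (p-1) * (1-x) ^ (q-1)) (Set.Ioo 0 1) := by
  have h := (Complex.betaIntegral_convergent (u := (p:ℂ)) (v := (q:ℂ))
    (by simpa using hp) (by simpa using hq)).1
  have h2 : IntegrableOn (fun x : ℝ => ‖(x:ℂ) ^ ((p:ℂ)-1) * (1-(x:ℂ)) ^ ((q:ℂ)-1)‖)
      (Set.Ioo 0 1) := (h.mono_set Set.Ioo_subset_Ioc_self).norm
  apply h2.congr_fun ?_ measurableSet_Ioo
  intro x hx
  have hx1 : (0:ℝ) < x := hx.1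
  have hx2 : (0:ℝ) < 1 - x := by linarith [hx.2]
  have e2 : (1 : ℂ) - (x:ℂ) = ((1 - x : ℝ) : ℂ) := by push_cast; ring
  show ‖(x:ℂ) ^ ((p:ℂ)-1) * (1-(x:ℂ)) ^ ((q:ℂ)-1)‖ = x ^ (p-1) * (1-x) ^ (q-1)
  rw [norm_mul, e2,
    Complex.norm_cpow_eq_rpow_re_of_pos hx1, Complex.norm_cpow_eq_rpow_re_of_pos hx2]
  norm_num

noncomputable def eulerF (n : ℕ) (x : ℝ) : ℝ :=
  bin (1/2) n * (x ^ ((n + 1/6 : ℝ) - 1) * (1-x) ^ ((5/6:ℝ) - 1))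

lemma eulerF_integrable (n : ℕ) : IntegrableOn (eulerF n) (Set.Ioo 0 1) := by
  have h := (integrableOn_beta (p := (n:ℝ) + 1/6) (by positivity)
    (by norm_num : (0:ℝ) < 5/6)).const_mul (bin (1/2) n)
  exact h

lemma eulerF_integral (n : ℕ) :
    ∫ x in Set.Ioo (0:ℝ) 1, eulerF n x = (Real.Gamma (1/6) * Real.Gamma (5/6)) * cseq n := by
  have : ∫ x in Set.Ioo (0:ℝ) 1, eulerF n x
      = bin (1/2) n * ∫ x in Set.Ioo (0:ℝ) 1, x ^ (((n:ℝ) + 1/6) - 1) * (1-x) ^ ((5/6:ℝ) - 1) :=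
    MeasureTheory.integral_const_mul _ _
  rw [this, beta_Ioo (by positivity) (by norm_num : (0:ℝ) < 5/6)]
  have e1 : (n : ℝ) + 1/6 = 1/6 + (n:ℝ) := by ring
  have hg1 : Real.Gamma ((n:ℝ) + 1/6) = poch (1/6) n * Real.Gamma (1/6) := by
    rw [e1]
    exact Gamma_add_nat (by norm_num) n
  have hg2 : Real.Gamma ((n:ℝ) + 1/6 + 5/6) = n.factorial := by
    have e2 : (n:ℝ) + 1/6 + 5/6 = 1 + n := by ring
    rw [e2, Gamma_add_nat one_pos n, Real.Gamma_one, poch_one, mul_one]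
  rw [hg1, hg2, cseq, bin, bin]
  have hf := (factorial_pos_real n).ne'
  field_simp

lemma eulerF_nonneg (n : ℕ) {x : ℝ} (hx : x ∈ Set.Ioo (0:ℝ) 1) : 0 ≤ eulerF n x := by
  have hx1 := hx.1
  have hx2 : (0:ℝ) < 1 - x := by linarith [hx.2]
  have hb := (bin_pos (show (0:ℝ) < 1/2 by norm_num) n).le
  rw [eulerF]
  positivity

lemma gauss_sum :
    ∑' n, cseq n = Real.Gamma (1/3) / (Real.Gamma (5/6) * Real.Gamma (1/2)) := by
  have hG16 : (0:ℝ) < Real.Gamma (1/6) := Real.Gamma_pos_of_pos (by norm_num)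
  have hG56 : (0:ℝ) < Real.Gamma (5/6) := Real.Gamma_pos_of_pos (by norm_num)
  have hG12 : (0:ℝ) < Real.Gamma (1/2) := Real.Gamma_pos_of_pos (by norm_num)
  have hG13 : (0:ℝ) < Real.Gamma (1/3) := Real.Gamma_pos_of_pos (by norm_num)
  have hnorm : ∀ n : ℕ, ∫ x in Set.Ioo (0:ℝ) 1, ‖eulerF n x‖
      = (Real.Gamma (1/6) * Real.Gamma (5/6)) * cseq n := by
    intro n
    rw [← eulerF_integral n]
    apply MeasureTheory.setIntegral_congr_fun measurableSet_Ioo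
    intro x hx
    simp only [Real.norm_eq_abs, _root_.abs_of_nonneg (eulerF_nonneg n hx)]
  have hsummable : Summable fun n : ℕ => ∫ x in Set.Ioo (0:ℝ) 1, ‖eulerF n x‖ := by
    rw [funext hnorm]
    exact summable_cseq.mul_left _
  have hswap := MeasureTheory.integral_tsum_of_summable_integral_norm
    (μ := MeasureTheory.volume.restrict (Set.Ioo (0:ℝ) 1)) (F := eulerF)
    (fun n => eulerF_integrable n) hsummable
  have hLHS : ∑' n : ℕ, ∫ x in Set.Ioo (0:ℝ) 1, eulerF n x
      = (Real.Gamma (1/6) * Real.Gamma (5/6)) * ∑' n, cseq n := by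
    rw [tsum_congr (fun n => eulerF_integral n)]
    exact tsum_mul_left
  have hpt : ∀ x ∈ Set.Ioo (0:ℝ) 1,
      (∑' n, eulerF n x) = x ^ ((1/6:ℝ) - 1) * (1-x) ^ ((1/3:ℝ) - 1) := by
    intro x hx
    obtain ⟨hx1, hx2⟩ := hx
    have hx3 : (0:ℝ) < 1 - x := by linarith
    have hs := hasSum_bin_half (t := x) hx1.le hx2
    have e : ∀ n : ℕ, eulerF n x
        = (bin (1/2) n * x ^ n) * (x ^ ((1/6:ℝ) - 1) * (1-x) ^ ((5/6:ℝ) - 1)) := by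
      intro n
      rw [eulerF]
      have e1 : x ^ (((n:ℝ) + 1/6) - 1) = x ^ (n:ℕ) * x ^ ((1/6:ℝ) - 1) := by
        rw [← Real.rpow_natCast x n, ← Real.rpow_add hx1]
        ring_nf
      rw [e1]
      ring
    rw [tsum_congr e, tsum_mul_right, hs.tsum_eq]
    have e2 : (1-x) ^ (-(1/2) : ℝ) * (1-x) ^ ((5/6:ℝ) - 1) = (1-x) ^ ((1/3:ℝ) - 1) := by
      rw [← Real.rpow_add hx3]
      norm_num
    calc (1-x) ^ (-(1/2) : ℝ) * (x ^ ((1/6:ℝ) - 1) * (1-x) ^ ((5/6:ℝ) - 1))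
        = x ^ ((1/6:ℝ) - 1) * ((1-x) ^ (-(1/2) : ℝ) * (1-x) ^ ((5/6:ℝ) - 1)) := by ring
    _ = x ^ ((1/6:ℝ) - 1) * (1-x) ^ ((1/3:ℝ) - 1) := by rw [e2]
  have hRHS : ∫ x in Set.Ioo (0:ℝ) 1, (∑' n, eulerF n x)
      = Real.Gamma (1/6) * Real.Gamma (1/3) / Real.Gamma (1/2) := by
    rw [MeasureTheory.setIntegral_congr_fun measurableSet_Ioo hpt,
      beta_Ioo (by norm_num : (0:ℝ) < 1/6) (by norm_num : (0:ℝ) < 1/3)]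
    norm_num
  rw [hLHS, hRHS] at hswap
  rw [eq_div_iff (by positivity)]
  rw [eq_div_iff (by positivity)] at hswap
  nlinarith [hswap]

/-! ### Gamma identities -/

noncomputable def Kconst : ℝ := Real.Gamma (1/6) * Real.Gamma (1/2) / Real.Gamma (2/3) / Real.pi

noncomputable def Sval : ℝ := Real.Gamma (1/3) / (Real.Gamma (5/6) * Real.Gamma (1/2))

lemma reflection_16 : Real.Gamma (1/6) * Real.Gamma (5/6) = 2 * Real.pi := by
  have h := Real.Gamma_mul_Gamma_one_sub (1/6)
  have e1 : (1:ℝ) - 1/6 = 5/6 := by norm_num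
  have e2 : Real.pi * (1/6) = Real.pi / 6 := by ring
  rw [e1, e2, Real.sin_pi_div_six] at h
  rw [h]
  field_simp

lemma reflection_13 : Real.Gamma (1/3) * Real.Gamma (2/3) * Real.sqrt 3 = 2 * Real.pi := by
  have h := Real.Gamma_mul_Gamma_one_sub (1/3)
  have e1 : (1:ℝ) - 1/3 = 2/3 := by norm_num
  have e2 : Real.pi * (1/3) = Real.pi / 3 := by ring
  rw [e1, e2, Real.sin_pi_div_three] at h
  rw [h]
  have h3 : (0:ℝ) < Real.sqrt 3 := Real.sqrt_pos.mpr (by norm_num)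
  field_simp

lemma gamma_sq_half : Real.Gamma (1/2) ^ 2 = Real.pi := by
  rw [Real.Gamma_one_half_eq]
  exact Real.sq_sqrt Real.pi_pos.le

lemma K_eq_sqrt3_S : Kconst = Real.sqrt 3 * Sval := by
  have hG16 : (0:ℝ) < Real.Gamma (1/6) := Real.Gamma_pos_of_pos (by norm_num)
  have hG56 : (0:ℝ) < Real.Gamma (5/6) := Real.Gamma_pos_of_pos (by norm_num)
  have hG12 : (0:ℝ) < Real.Gamma (1/2) := Real.Gamma_pos_of_pos (by norm_num)
  have hG13 : (0:ℝ) < Real.Gamma (1/3) := Real.Gamma_pos_of_pos (by norm_num)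
  have hG23 : (0:ℝ) < Real.Gamma (2/3) := Real.Gamma_pos_of_pos (by norm_num)
  have h3 : (0:ℝ) < Real.sqrt 3 := Real.sqrt_pos.mpr (by norm_num)
  have hpi := Real.pi_pos
  have ha : Real.Gamma (1/6) = 2 * Real.pi / Real.Gamma (5/6) := by
    rw [eq_div_iff hG56.ne']
    exact reflection_16
  have hd : Real.Gamma (1/3) = 2 * Real.pi / (Real.Gamma (2/3) * Real.sqrt 3) := by
    rw [eq_div_iff (by positivity)]
    linarith [reflection_13]
  have hp : Real.pi = Real.Gamma (1/2) ^ 2 := gamma_sq_half.symm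
  rw [Kconst, Sval, ha, hd, hp]
  field_simp

lemma S_pos : 0 < Sval := by
  rw [Sval]
  have hG56 : (0:ℝ) < Real.Gamma (5/6) := Real.Gamma_pos_of_pos (by norm_num)
  have hG12 : (0:ℝ) < Real.Gamma (1/2) := Real.Gamma_pos_of_pos (by norm_num)
  have hG13 : (0:ℝ) < Real.Gamma (1/3) := Real.Gamma_pos_of_pos (by norm_num)
  positivity

lemma K_pos : 0 < Kconst := by
  rw [K_eq_sqrt3_S]
  exact mul_pos (Real.sqrt_pos.mpr (by norm_num)) S_pos

/-! ### Bridges to the complex definitions -/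

lemma cseq_eq (n : ℕ) :
    poch (1/6) n * poch (1/2) n / (poch 1 n * n.factorial) = cseq n := by
  rw [cseq, bin, bin, poch_one, div_mul_div_comm]

lemma ofReal_poch (r : ℝ) (n : ℕ) :
    ((poch r n : ℝ) : ℂ) = ∏ k ∈ Finset.range n, ((r:ℂ) + k) := by
  rw [poch, Complex.ofReal_prod]
  apply Finset.prod_congr rfl
  intro k _
  push_cast
  ring

lemma hyperF1_eq (w : ℝ) :
    hyperF (1/6) (1/2) (2/3) (w:ℂ) = ((∑' n, dseq n * w ^ n : ℝ) : ℂ) := by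
  rw [hyperF, Complex.ofReal_tsum]
  apply tsum_congr
  intro n
  have p1 := ofReal_poch (1/6) n
  have p2 := ofReal_poch (1/2) n
  have p3 := ofReal_poch (2/3) n
  push_cast at p1 p2 p3
  rw [← p1, ← p2, ← p3, dseq]
  have h1 := (poch_pos (show (0:ℝ) < 2/3 by norm_num) n).ne'
  have h2 := (factorial_pos_real n).ne'
  push_cast
  ring

lemma hyperF2_eq (z : ℝ) :
    hyperF (1/6) (1/2) 1 (z:ℂ) = ((∑' n, cseq n * z ^ n : ℝ) : ℂ) := by
  rw [hyperF, Complex.ofReal_tsum]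
  apply tsum_congr
  intro n
  have p1 := ofReal_poch (1/6) n
  have p2 := ofReal_poch (1/2) n
  have p3 := ofReal_poch 1 n
  push_cast at p1 p2 p3
  rw [← p1, ← p2, ← p3, ← cseq_eq n]
  have h1 := (poch_pos (show (0:ℝ) < 1 by norm_num) n).ne'
  have h2 := (factorial_pos_real n).ne'
  push_cast
  ring

lemma betaFn_eq :
    betaFn (1/6) (1/2) = ((Real.Gamma (1/6) * Real.Gamma (1/2) / Real.Gamma (2/3) : ℝ) : ℂ) := by
  rw [betaFn]
  have e3 : (1/6 + 1/2 : ℂ) = ((2/3:ℝ):ℂ) := by norm_num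
  have e1 : (1/6 : ℂ) = ((1/6:ℝ):ℂ) := by norm_num
  have e2 : (1/2 : ℂ) = ((1/2:ℝ):ℂ) := by norm_num
  rw [e3, e1, e2, Complex.Gamma_ofReal, Complex.Gamma_ofReal, Complex.Gamma_ofReal]
  push_cast
  ring

lemma omegaC_sq :
    omegaC ^ 2 = ((-(1/2) : ℝ) : ℂ) + ((-(Real.sqrt 3 / 2) : ℝ) : ℂ) * Complex.I := by
  have hs : ((Real.sqrt 3 : ℝ) : ℂ) ^ 2 = 3 := by
    rw [← Complex.ofReal_pow, Real.sq_sqrt (by norm_num : (0:ℝ) ≤ 3)]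
    norm_num
  rw [omegaC]
  push_cast
  linear_combination (Complex.I ^ 2 / 4) * hs + (3/4 : ℂ) * Complex.I_sq

lemma omega_eq :
    ((-(1/2) : ℝ) : ℂ) + (((Real.sqrt 3 / 2) : ℝ) : ℂ) * Complex.I = omegaC := by
  rw [omegaC]
  push_cast
  ring

lemma phi1_form (z : ℝ) :
    phi1 (z:ℂ) = ((-(1/2) : ℝ) : ℂ) +
      ((-(Real.sqrt 3 / 2) + Kconst * ((∑' n, dseq n * (1-z) ^ n) / (∑' n, cseq n * z ^ n)) : ℝ) : ℂ)
        * Complex.I := by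
  have e : (1:ℂ) - (z:ℂ) = ((1 - z : ℝ) : ℂ) := by push_cast; ring
  rw [phi1, e, hyperF1_eq, hyperF2_eq, betaFn_eq, omegaC_sq, Kconst]
  push_cast
  ring

lemma phi1_re (z : ℝ) : (phi1 (z:ℂ)).re = -(1/2) := by
  rw [phi1_form]
  simp

lemma phi1_im (z : ℝ) : (phi1 (z:ℂ)).im
    = -(Real.sqrt 3 / 2) + Kconst * ((∑' n, dseq n * (1-z) ^ n) / (∑' n, cseq n * z ^ n)) := by
  rw [phi1_form]
  simp

end Phi1Aux

open Phi1Aux Filter Set Topology in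
/-- Behavior of Schwarz's map `φ₁` on the interval `(0,1)`. -/
theorem phi1_on_interval :
    (∀ z : ℝ, 0 < z → z < 1 →
      ((hyperF (1/6) (1/2) (2/3) (1 - (z : ℂ))).im = 0 ∧
        0 < (hyperF (1/6) (1/2) (2/3) (1 - (z : ℂ))).re) ∧
      ((hyperF (1/6) (1/2) 1 (z : ℂ)).im = 0 ∧
        0 < (hyperF (1/6) (1/2) 1 (z : ℂ)).re) ∧
      (phi1 (z : ℂ)).re = -1/2 ∧ Real.sqrt 3 / 2 < (phi1 (z : ℂ)).im) ∧
    Filter.Tendsto (fun z : ℝ => (phi1 (z : ℂ)).im)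
      (nhdsWithin 0 (Set.Ioo 0 1)) Filter.atTop ∧
    Filter.Tendsto (fun z : ℝ => phi1 (z : ℂ))
      (nhdsWithin 1 (Set.Ioo 0 1)) (nhds omegaC) := by
  have hS_eq : ∑' n, cseq n = Sval := gauss_sum
  have hSpos := S_pos
  have hKpos := K_pos
  refine ⟨?_, ?_, ?_⟩
  · intro z hz0 hz1
    have hw0 : (0:ℝ) < 1 - z := by linarith
    have hw1 : 1 - z < 1 := by linarith
    have e : (1:ℂ) - (z:ℂ) = ((1 - z : ℝ) : ℂ) := by push_cast; ring
    have hF1 : 1 ≤ ∑' n, dseq n * (1-z) ^ n := F1_ge_one hw0.le hw1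
    have hF2 : 1 ≤ ∑' n, cseq n * z ^ n := F2_ge_one hz0.le hz1.le
    have hF2S : ∑' n, cseq n * z ^ n < Sval := hS_eq ▸ F2_lt_S hz0 hz1
    refine ⟨⟨?_, ?_⟩, ⟨?_, ?_⟩, ?_, ?_⟩
    · rw [e, hyperF1_eq]
      exact Complex.ofReal_im _
    · rw [e, hyperF1_eq, Complex.ofReal_re]
      linarith
    · rw [hyperF2_eq]
      exact Complex.ofReal_im _
    · rw [hyperF2_eq, Complex.ofReal_re]
      linarith
    · rw [phi1_re]
      norm_num
    · rw [phi1_im]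
      have h1 : Real.sqrt 3 = Kconst / Sval := by
        rw [K_eq_sqrt3_S]
        field_simp
      have h2 : Kconst / Sval < Kconst / (∑' n, cseq n * z ^ n) :=
        div_lt_div_of_pos_left hKpos (by linarith) hF2S
      have h3 : Kconst / (∑' n, cseq n * z ^ n)
          ≤ Kconst * ((∑' n, dseq n * (1-z) ^ n) / (∑' n, cseq n * z ^ n)) := by
        rw [div_eq_mul_one_div]
        apply mul_le_mul_of_nonneg_left _ hKpos.le
        gcongr
      linarith
  · -- Im → ∞ as z → 0⁺
    have hmap0 : Tendsto (fun z : ℝ => 1 - z) (nhdsWithin 0 (Ioo (0:ℝ) 1))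
        (nhdsWithin 1 (Ioo (0:ℝ) 1)) := by
      apply tendsto_nhdsWithin_of_tendsto_nhds_of_eventually_within
      · have hc : Continuous fun z : ℝ => 1 - z := by continuity
        have := (hc.tendsto 0).mono_left (nhdsWithin_le_nhds (s := Ioo (0:ℝ) 1))
        simpa using this
      · filter_upwards [self_mem_nhdsWithin] with z hz
        exact ⟨by linarith [hz.2], by linarith [hz.1]⟩
    have hF1top : Tendsto (fun z : ℝ => ∑' n, dseq n * (1-z) ^ n)
        (nhdsWithin 0 (Ioo (0:ℝ) 1)) atTop := F1_tendsto_atTop.comp hmap0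
    have hgrow : Tendsto (fun z : ℝ =>
        -(Real.sqrt 3 / 2) + (Kconst / Sval) * (∑' n, dseq n * (1-z) ^ n))
        (nhdsWithin 0 (Ioo (0:ℝ) 1)) atTop := by
      apply tendsto_atTop_add_const_left
      exact hF1top.const_mul_atTop (div_pos hKpos hSpos)
    apply tendsto_atTop_mono' _ ?_ hgrow
    filter_upwards [self_mem_nhdsWithin] with z hz
    rw [phi1_im]
    have hF1 : 1 ≤ ∑' n, dseq n * (1-z) ^ n :=
      F1_ge_one (by linarith [hz.2]) (by linarith [hz.1])
    have hF2pos : (0:ℝ) < ∑' n, cseq n * z ^ n :=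
      lt_of_lt_of_le one_pos (F2_ge_one hz.1.le hz.2.le)
    have hF2le : ∑' n, cseq n * z ^ n ≤ Sval := by
      rw [← hS_eq]
      apply Summable.tsum_le_tsum ?_ (summable_cseq_mul_pow hz.1.le hz.2.le) summable_cseq
      intro n
      calc cseq n * z ^ n ≤ cseq n * 1 :=
            mul_le_mul_of_nonneg_left (pow_le_one₀ hz.1.le hz.2.le) (cseq_pos n).le
      _ = cseq n := mul_one _
    have hkey : (Kconst / Sval) * (∑' n, dseq n * (1-z) ^ n)
        ≤ Kconst * ((∑' n, dseq n * (1-z) ^ n) / (∑' n, cseq n * z ^ n)) := by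
      rw [div_mul_eq_mul_div, mul_div_assoc]
      apply mul_le_mul_of_nonneg_left _ hKpos.le
      gcongr
    linarith
  · -- φ₁ → ω as z → 1⁻
    have hmap1 : Tendsto (fun z : ℝ => 1 - z) (nhdsWithin 1 (Ioo (0:ℝ) 1))
        (nhdsWithin 0 (Ioo (0:ℝ) 1)) := by
      apply tendsto_nhdsWithin_of_tendsto_nhds_of_eventually_within
      · have hc : Continuous fun z : ℝ => 1 - z := by continuity
        have := (hc.tendsto 1).mono_left (nhdsWithin_le_nhds (s := Ioo (0:ℝ) 1))
        simpa using this
      · filter_upwards [self_mem_nhdsWithin] with z hz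
        exact ⟨by linarith [hz.2], by linarith [hz.1]⟩
    have hF1one : Tendsto (fun z : ℝ => ∑' n, dseq n * (1-z) ^ n)
        (nhdsWithin 1 (Ioo (0:ℝ) 1)) (nhds 1) := F1_tendsto_one.comp hmap1
    have hF2S : Tendsto (fun z : ℝ => ∑' n, cseq n * z ^ n)
        (nhdsWithin 1 (Ioo (0:ℝ) 1)) (nhds Sval) := hS_eq ▸ F2_tendsto_S
    have hratio : Tendsto (fun z : ℝ =>
        -(Real.sqrt 3 / 2) + Kconst * ((∑' n, dseq n * (1-z) ^ n) / (∑' n, cseq n * z ^ n)))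
        (nhdsWithin 1 (Ioo (0:ℝ) 1)) (nhds (-(Real.sqrt 3 / 2) + Kconst * (1 / Sval))) :=
      tendsto_const_nhds.add ((hF1one.div hF2S hSpos.ne').const_mul Kconst)
    have hval : -(Real.sqrt 3 / 2) + Kconst * (1 / Sval) = Real.sqrt 3 / 2 := by
      rw [K_eq_sqrt3_S]
      field_simp
      ring
    rw [hval] at hratio
    have hcplx : Tendsto (fun z : ℝ => ((-(1/2) : ℝ) : ℂ) +
        ((-(Real.sqrt 3 / 2) + Kconst *
          ((∑' n, dseq n * (1-z) ^ n) / (∑' n, cseq n * z ^ n)) : ℝ) : ℂ) * Complex.I)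
        (nhdsWithin 1 (Ioo (0:ℝ) 1))
        (nhds (((-(1/2) : ℝ) : ℂ) + (((Real.sqrt 3 / 2) : ℝ) : ℂ) * Complex.I)) :=
      tendsto_const_nhds.add
        (((Complex.continuous_ofReal.tendsto _).comp hratio).mul_const Complex.I)
    rw [omega_eq] at hcplx
    apply hcplx.congr
    intro z
    exact (phi1_form z).symm
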